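/- Let e₁ = 1, e₂ = i, e₃ = (1+i+j+k)/2, e₄ = (−1+(φ−1)i−φj)/2 in the real quaternions ℍ, and let I be the set of ℤ[φ]-linear combinations r₁e₁ + r₂e₂ + r₃e₃ + r₄e₄ with each rᵢ ∈ ℤ + ℤφ ⊂ ℝ (the icosian ring). Then: (i) I is closed under quaternion multiplication; (ii) I is closed under quaternion conjugation; (iii) each generator eᵣ has quaternionic norm normSq(eᵣ) = 1; (iv) for every x ∈ I the norm normSq(x) lies in ℤ + ℤφ ⊂ ℝ. -/

import Mathlib

noncomputable def φ : ℝ := (1 + Real.sqrt 5) / 2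

/-- The golden integer ring `ℤ + ℤφ` as a subset of `ℝ`. -/
def Zφ : Set ℝ := {x | ∃ a b : ℤ, x = (a : ℝ) + (b : ℝ) * φ}

noncomputable def e₁ : Quaternion ℝ := 1
noncomputable def e₂ : Quaternion ℝ := ⟨0, 1, 0, 0⟩
noncomputable def e₃ : Quaternion ℝ := ⟨1/2, 1/2, 1/2, 1/2⟩
noncomputable def e₄ : Quaternion ℝ := ⟨-(1/2), (φ - 1)/2, -(φ/2), 0⟩

/-- The icosian ring: `ℤ[φ]`-linear combinations of `e₁, e₂, e₃, e₄`. -/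
noncomputable def Icosian : Set (Quaternion ℝ) :=
  {x | ∃ r₁ r₂ r₃ r₄ : ℝ, r₁ ∈ Zφ ∧ r₂ ∈ Zφ ∧ r₃ ∈ Zφ ∧ r₄ ∈ Zφ ∧
    x = r₁ • e₁ + r₂ • e₂ + r₃ • e₃ + r₄ • e₄}

lemma phi_sq : φ ^ 2 = φ + 1 := by
  have h : Real.sqrt 5 ^ 2 = 5 := Real.sq_sqrt (by norm_num)
  unfold φ
  nlinarith [h]

lemma Zφ_add {x y : ℝ} (hx : x ∈ Zφ) (hy : y ∈ Zφ) : x + y ∈ Zφ := by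
  obtain ⟨a, b, rfl⟩ := hx
  obtain ⟨c, d, rfl⟩ := hy
  exact ⟨a + c, b + d, by push_cast; ring⟩

lemma Zφ_neg {x : ℝ} (hx : x ∈ Zφ) : -x ∈ Zφ := by
  obtain ⟨a, b, rfl⟩ := hx
  exact ⟨-a, -b, by push_cast; ring⟩

lemma Zφ_sub {x y : ℝ} (hx : x ∈ Zφ) (hy : y ∈ Zφ) : x - y ∈ Zφ := by
  have := Zφ_add hx (Zφ_neg hy); simpa [sub_eq_add_neg] using this

lemma Zφ_mul {x y : ℝ} (hx : x ∈ Zφ) (hy : y ∈ Zφ) : x * y ∈ Zφ := by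
  obtain ⟨a, b, rfl⟩ := hx
  obtain ⟨c, d, rfl⟩ := hy
  refine ⟨a * c + b * d, a * d + b * c + b * d, ?_⟩
  push_cast
  linear_combination ((b : ℝ) * d) * phi_sq

lemma Zφ_coeff (m n : ℤ) : ((m : ℝ) + (n : ℝ) * φ) ∈ Zφ := ⟨m, n, rfl⟩

lemma Zφ_term (m n : ℤ) {x y : ℝ} (hx : x ∈ Zφ) (hy : y ∈ Zφ) :
    ((m : ℝ) + (n : ℝ) * φ) * (x * y) ∈ Zφ :=
  Zφ_mul (Zφ_coeff m n) (Zφ_mul hx hy)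

lemma L_coords (r1 r2 r3 r4 : ℝ) :
    r1 • e₁ + r2 • e₂ + r3 • e₃ + r4 • e₄ =
      (⟨r1 + r3/2 - r4/2, r2 + r3/2 + r4*φ/2 - r4/2, r3/2 - r4*φ/2, r3/2⟩ :
        Quaternion ℝ) := by
  apply Quaternion.ext <;>
    simp only [Quaternion.re_add, Quaternion.imI_add, Quaternion.imJ_add, Quaternion.imK_add,
      Quaternion.re_smul, Quaternion.imI_smul, Quaternion.imJ_smul, Quaternion.imK_smul] <;>
    simp [e₁, e₂, e₃, e₄, Quaternion.re_one, Quaternion.imI_one, Quaternion.imJ_one,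
      Quaternion.imK_one, smul_eq_mul] <;> ring

/-- The icosian ring is closed under quaternion multiplication and conjugation,
its generators have norm `1`, and all its elements have norm in `ℤ[φ]`. -/
theorem icosian_ring_properties :
    (∀ x ∈ Icosian, ∀ y ∈ Icosian, x * y ∈ Icosian) ∧
    (∀ x ∈ Icosian, star x ∈ Icosian) ∧
    (Quaternion.normSq e₁ = 1 ∧ Quaternion.normSq e₂ = 1 ∧
      Quaternion.normSq e₃ = 1 ∧ Quaternion.normSq e₄ = 1) ∧
    (∀ x ∈ Icosian, Quaternion.normSq x ∈ Zφ) := by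
  refine ⟨?_, ?_, ⟨?_, ?_, ?_, ?_⟩, ?_⟩
  · rintro x ⟨r1, r2, r3, r4, hr1, hr2, hr3, hr4, rfl⟩
      y ⟨s1, s2, s3, s4, hs1, hs2, hs3, hs4, rfl⟩
    refine ⟨((((1 : ℤ) : ℝ)) + (((0 : ℤ) : ℝ)) * φ) * (r1 * s1) + ((((-1 : ℤ) : ℝ)) + (((0 : ℤ) : ℝ)) * φ) * (r2 * s2) + ((((-2 : ℤ) : ℝ)) + (((1 : ℤ) : ℝ)) * φ) * (r2 * s3) + ((((1 : ℤ) : ℝ)) + (((-1 : ℤ) : ℝ)) * φ) * (r3 * s2) + ((((-1 : ℤ) : ℝ)) + (((0 : ℤ) : ℝ)) * φ) * (r3 * s3) + ((((-1 : ℤ) : ℝ)) + (((1 : ℤ) : ℝ)) * φ) * (r3 * s4) + ((((1 : ℤ) : ℝ)) + (((-1 : ℤ) : ℝ)) * φ) * (r4 * s2) + ((((2 : ℤ) : ℝ)) + (((-1 : ℤ) : ℝ)) * φ) * (r4 * s3) + ((((-1 : ℤ) : ℝ)) + (((0 : ℤ) : ℝ)) * φ) * (r4 * s4),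
      ((((1 : ℤ) : ℝ)) + (((0 : ℤ) : ℝ)) * φ) * (r1 * s2) + ((((1 : ℤ) : ℝ)) + (((0 : ℤ) : ℝ)) * φ) * (r2 * s1) + ((((-2 : ℤ) : ℝ)) + (((1 : ℤ) : ℝ)) * φ) * (r2 * s3) + ((((-1 : ℤ) : ℝ)) + (((1 : ℤ) : ℝ)) * φ) * (r2 * s4) + ((((3 : ℤ) : ℝ)) + (((-1 : ℤ) : ℝ)) * φ) * (r3 * s2) + ((((-2 : ℤ) : ℝ)) + (((2 : ℤ) : ℝ)) * φ) * (r3 * s4) + ((((0 : ℤ) : ℝ)) + (((-1 : ℤ) : ℝ)) * φ) * (r4 * s2) + ((((2 : ℤ) : ℝ)) + (((-2 : ℤ) : ℝ)) * φ) * (r4 * s3),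
      ((((1 : ℤ) : ℝ)) + (((0 : ℤ) : ℝ)) * φ) * (r1 * s3) + ((((1 : ℤ) : ℝ)) + (((0 : ℤ) : ℝ)) * φ) * (r2 * s3) + ((((0 : ℤ) : ℝ)) + (((-1 : ℤ) : ℝ)) * φ) * (r2 * s4) + ((((1 : ℤ) : ℝ)) + (((0 : ℤ) : ℝ)) * φ) * (r3 * s1) + ((((-1 : ℤ) : ℝ)) + (((0 : ℤ) : ℝ)) * φ) * (r3 * s2) + ((((1 : ℤ) : ℝ)) + (((0 : ℤ) : ℝ)) * φ) * (r3 * s3) + ((((0 : ℤ) : ℝ)) + (((-1 : ℤ) : ℝ)) * φ) * (r3 * s4) + ((((0 : ℤ) : ℝ)) + (((1 : ℤ) : ℝ)) * φ) * (r4 * s2) + ((((-1 : ℤ) : ℝ)) + (((1 : ℤ) : ℝ)) * φ) * (r4 * s3),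
      ((((1 : ℤ) : ℝ)) + (((0 : ℤ) : ℝ)) * φ) * (r1 * s4) + ((((-2 : ℤ) : ℝ)) + (((2 : ℤ) : ℝ)) * φ) * (r2 * s3) + ((((-1 : ℤ) : ℝ)) + (((0 : ℤ) : ℝ)) * φ) * (r2 * s4) + ((((2 : ℤ) : ℝ)) + (((-2 : ℤ) : ℝ)) * φ) * (r3 * s2) + ((((-2 : ℤ) : ℝ)) + (((1 : ℤ) : ℝ)) * φ) * (r3 * s4) + ((((1 : ℤ) : ℝ)) + (((0 : ℤ) : ℝ)) * φ) * (r4 * s1) + ((((1 : ℤ) : ℝ)) + (((0 : ℤ) : ℝ)) * φ) * (r4 * s2) + ((((3 : ℤ) : ℝ)) + (((-1 : ℤ) : ℝ)) * φ) * (r4 * s3) + ((((-1 : ℤ) : ℝ)) + (((0 : ℤ) : ℝ)) * φ) * (r4 * s4),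
      ?_, ?_, ?_, ?_, ?_⟩
    · repeat' apply Zφ_add
      all_goals exact Zφ_term _ _ (by assumption) (by assumption)
    · repeat' apply Zφ_add
      all_goals exact Zφ_term _ _ (by assumption) (by assumption)
    · repeat' apply Zφ_add
      all_goals exact Zφ_term _ _ (by assumption) (by assumption)
    · repeat' apply Zφ_add
      all_goals exact Zφ_term _ _ (by assumption) (by assumption)
    · apply Quaternion.ext <;>
        simp only [Quaternion.re_mul, Quaternion.imI_mul, Quaternion.imJ_mul,
          Quaternion.imK_mul] <;> rw [L_coords r1 r2 r3 r4, L_coords s1 s2 s3 s4, L_coords] <;> push_cast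
      · linear_combination (-(1:ℝ)/2 * r4 * s4) * phi_sq
      · linear_combination (-(r2*s3) + r3*s2 - (1:ℝ)/2*r3*s4 + (1:ℝ)/2*r4*s3) * phi_sq
      · linear_combination ((r2*s3) - r3*s2 + (1:ℝ)/2*r3*s4 - (1:ℝ)/2*r4*s3) * phi_sq
      · ring
  · rintro x ⟨r1, r2, r3, r4, hr1, hr2, hr3, hr4, rfl⟩
    refine ⟨r1 + r3 - r4, -r2, -r3, -r4,
      Zφ_sub (Zφ_add hr1 hr3) hr4, Zφ_neg hr2, Zφ_neg hr3, Zφ_neg hr4, ?_⟩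
    apply Quaternion.ext <;>
      simp only [Quaternion.re_star, Quaternion.imI_star, Quaternion.imJ_star,
        Quaternion.imK_star] <;> rw [L_coords r1 r2 r3 r4, L_coords] <;> simp only [QuaternionAlgebra.re_star, QuaternionAlgebra.imI_star, QuaternionAlgebra.imJ_star,
        QuaternionAlgebra.imK_star] <;> ring
  · simp [e₁]
  · rw [Quaternion.normSq_def']; simp [e₂]
  · rw [Quaternion.normSq_def']; norm_num [e₃]
  · rw [Quaternion.normSq_def']
    show (-(1/2):ℝ)^2 + ((φ-1)/2)^2 + (-(φ/2))^2 + (0:ℝ)^2 = 1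
    linear_combination ((1:ℝ)/2) * phi_sq
  · rintro x ⟨r1, r2, r3, r4, hr1, hr2, hr3, hr4, rfl⟩
    have key : Quaternion.normSq (r1 • e₁ + r2 • e₂ + r3 • e₃ + r4 • e₄) =
        ((((1 : ℤ) : ℝ)) + (((0 : ℤ) : ℝ)) * φ) * (r1 * r1) + ((((1 : ℤ) : ℝ)) + (((0 : ℤ) : ℝ)) * φ) * (r1 * r3) + ((((-1 : ℤ) : ℝ)) + (((0 : ℤ) : ℝ)) * φ) * (r1 * r4) + ((((1 : ℤ) : ℝ)) + (((0 : ℤ) : ℝ)) * φ) * (r2 * r2) + ((((1 : ℤ) : ℝ)) + (((0 : ℤ) : ℝ)) * φ) * (r2 * r3) + ((((-1 : ℤ) : ℝ)) + (((1 : ℤ) : ℝ)) * φ) * (r2 * r4) + ((((1 : ℤ) : ℝ)) + (((0 : ℤ) : ℝ)) * φ) * (r3 * r3) + ((((-1 : ℤ) : ℝ)) + (((0 : ℤ) : ℝ)) * φ) * (r3 * r4) + ((((1 : ℤ) : ℝ)) + (((0 : ℤ) : ℝ)) * φ) * (r4 * r4) := by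
      rw [Quaternion.normSq_def', L_coords r1 r2 r3 r4]
      push_cast
      linear_combination ((1:ℝ)/2 * r4 * r4) * phi_sq
    rw [key]
    repeat' apply Zφ_add
    all_goals exact Zφ_term _ _ (by assumption) (by assumption)
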